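/- For any finite set of pairwise non-overlapping convex bodies in the plane, there exists at least one body that can be translated arbitrarily far away without intersecting the interiors of the others (i.e., every finite planar arrangement of convex bodies can be disassembled one by one by translations). -/

import Mathlib

open RealInnerProductSpace

namespace PlanarDisassemble

noncomputable section

abbrev E2 := EuclideanSpace ℝ (Fin 2)

def ee0 : E2 := EuclideanSpace.single 0 1
def ee1 : E2 := EuclideanSpace.single 1 1

lemma ee1_ne_zero : ee1 ≠ 0 := by
  intro h
  have : ee1 1 = (0 : ℝ) := by rw [h]; rfl
  simp [ee1, EuclideanSpace.single_apply] at this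

lemma decomp (x : E2) : x = x 0 • ee0 + x 1 • ee1 := by
  ext j
  fin_cases j <;>
    simp [ee0, ee1, EuclideanSpace.single_apply, PiLp.add_apply, PiLp.smul_apply]

lemma clm_eval (f : E2 →L[ℝ] ℝ) (x : E2) : f x = x 0 * f ee0 + x 1 * f ee1 := by
  conv_lhs => rw [decomp x]
  rw [map_add, map_smul, map_smul]
  simp [smul_eq_mul]

/-- first-coordinate projection -/
def pr : E2 →L[ℝ] ℝ := EuclideanSpace.proj 0

lemma pr_surjective : Function.Surjective pr := by
  intro y
  exact ⟨EuclideanSpace.single 0 y, by simp [pr]⟩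

/-- successor modulo a variable base -/
lemma succ_mod (a b : ℕ) : (a + 1) % b = if a % b + 1 = b then 0 else (a % b + 1) % b := by
  by_cases hc : a % b + 1 = b
  · rw [if_pos hc, ← Nat.mod_add_mod, hc, Nat.mod_self]
  · rw [if_neg hc, ← Nat.mod_add_mod]

variable {m : ℕ} (U : Fin m → Set E2)

/-- "i lies strictly below j on some common vertical line" -/
def R (i j : Fin m) : Prop :=
  i ≠ j ∧ ∃ a ∈ U i, ∃ b ∈ U j, a 0 = b 0 ∧ a 1 < b 1

/-- projection of U i to the first coordinate -/
def I (i : Fin m) : Set ℝ := (fun x : E2 => x 0) '' U i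

section props

lemma I_open (hop : ∀ i, IsOpen (U i)) (i : Fin m) : IsOpen (I U i) := by
  have h : I U i = pr '' U i := rfl
  rw [h]
  exact (pr.isOpenMap pr_surjective) _ (hop i)

lemma I_ordConn (hcv : ∀ i, Convex ℝ (U i)) (i : Fin m) : (I U i).OrdConnected := by
  have h : I U i = pr.toLinearMap '' U i := rfl
  rw [h]
  exact (Convex.linear_image (hcv i) _).ordConnected

lemma I_bddBelow (hbdd : ∀ i, Bornology.IsBounded (U i)) (i : Fin m) : BddBelow (I U i) := by
  have hb : Bornology.IsBounded (I U i) := by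
    have h : I U i = pr '' U i := rfl
    rw [h]
    exact pr.lipschitz.isBounded_image (hbdd i)
  exact hb.bddBelow

lemma lt_of_mem_I_open (hop : ∀ i, IsOpen (U i)) (hbdd : ∀ i, Bornology.IsBounded (U i)) {i : Fin m} {p : ℝ} (hpi : p ∈ I U i) :
    sInf (I U i) < p := by
  have hopen := I_open U hop i
  obtain ⟨ε, hε, hball⟩ := Metric.isOpen_iff.1 hopen p hpi
  have hmem : p - ε / 2 ∈ I U i := by
    apply hball
    rw [Metric.mem_ball, Real.dist_eq]
    rw [abs_of_nonpos (by linarith)]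
    linarith
  have := csInf_le (I_bddBelow U hbdd i) hmem
  linarith

/-- Consistency: if i is below j somewhere, it is below j on every common vertical line. -/
lemma cons (hop : ∀ i, IsOpen (U i)) (hcv : ∀ i, Convex ℝ (U i)) (hdis : ∀ i j, i ≠ j → Disjoint (U i) (U j)) {i j : Fin m} (h : R U i j) :
    ∀ a ∈ U i, ∀ b ∈ U j, a 0 = b 0 → a 1 < b 1 := by
  obtain ⟨hne, a0, ha0, b0, hb0, h0, h1⟩ := h
  obtain ⟨f, c, hf, hg⟩ := geometric_hahn_banach_open_open (hcv i) (hop i)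
    (hcv j) (hop j) (hdis i j hne)
  have key : ∀ x ∈ U i, ∀ y ∈ U j,
      x 0 * f ee0 + x 1 * f ee1 < y 0 * f ee0 + y 1 * f ee1 := by
    intro x hx y hy
    rw [← clm_eval, ← clm_eval]
    exact lt_trans (hf x hx) (hg y hy)
  have hq : 0 < f ee1 := by
    have hk := key a0 ha0 b0 hb0
    rw [h0] at hk
    by_contra hq
    push_neg at hq
    nlinarith
  intro a ha b hb hab
  have hk := key a ha b hb
  rw [hab] at hk
  have hmul : a 1 * f ee1 < b 1 * f ee1 := by linarith
  exact lt_of_mul_lt_mul_right hmul hq.le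

lemma antisym (hop : ∀ i, IsOpen (U i)) (hcv : ∀ i, Convex ℝ (U i)) (hdis : ∀ i j, i ≠ j → Disjoint (U i) (U j)) {i j : Fin m} (hij : R U i j) (hji : R U j i) : False := by
  obtain ⟨hne, a, ha, b, hb, h0, h1⟩ := hji
  have := cons U hop hcv hdis hij b hb a ha h0.symm
  linarith

lemma R_proj {i j : Fin m} (h : R U i j) : ∃ s, s ∈ I U i ∧ s ∈ I U j := by
  obtain ⟨_, a, ha, b, hb, h0, _⟩ := h
  exact ⟨a 0, ⟨a, ha, rfl⟩, ⟨b, hb, h0.symm⟩⟩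

lemma comparable (hdis : ∀ i j, i ≠ j → Disjoint (U i) (U j)) {i j : Fin m} (hne : i ≠ j) {s : ℝ}
    (hsi : s ∈ I U i) (hsj : s ∈ I U j) : R U i j ∨ R U j i := by
  obtain ⟨a, ha, ha0⟩ := hsi
  obtain ⟨b, hb, hb0⟩ := hsj
  have hab : a ≠ b := fun h => (hdis i j hne).ne_of_mem ha hb h
  have h0 : a 0 = b 0 := ha0.trans hb0.symm
  rcases lt_trichotomy (a 1) (b 1) with h | h | h
  · exact Or.inl ⟨hne, a, ha, b, hb, h0, h⟩
  · exfalso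
    apply hab
    ext k
    fin_cases k
    · exact h0
    · exact h
  · exact Or.inr ⟨hne.symm, b, hb, a, ha, h0.symm, h⟩

lemma threeCycle (hop : ∀ i, IsOpen (U i)) (hcv : ∀ i, Convex ℝ (U i)) (hdis : ∀ i j, i ≠ j → Disjoint (U i) (U j)) {a b c : Fin m} (hab : R U a b) (hbc : R U b c)
    (hca : R U c a) : False := by
  obtain ⟨s1, hs1a, hs1b⟩ := R_proj U hab
  obtain ⟨s2, hs2b, hs2c⟩ := R_proj U hbc
  obtain ⟨s3, hs3c, hs3a⟩ := R_proj U hca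
  -- the median of s1 s2 s3
  set md : ℝ := max (min s1 s2) (max (min s1 s3) (min s2 s3)) with hmd
  have hmem : ∀ x y : ℝ, ∀ T : Set ℝ, T.OrdConnected → x ∈ T → y ∈ T →
      min x y ≤ md → md ≤ max x y → md ∈ T := by
    intro x y T hT hx hy h1 h2
    apply hT.uIcc_subset hx hy
    rw [Set.mem_uIcc]
    rcases le_total x y with h | h
    · left
      rw [min_eq_left h] at h1
      rw [max_eq_right h] at h2
      exact ⟨h1, h2⟩
    · right
      rw [min_eq_right h] at h1
      rw [max_eq_left h] at h2
      exact ⟨h1, h2⟩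
  have h13lo : min s1 s3 ≤ md := le_trans (le_max_left _ _) (le_max_right _ _)
  have h13hi : md ≤ max s1 s3 := by
    apply max_le
    · exact le_trans (min_le_left _ _) (le_max_left _ _)
    apply max_le
    · exact min_le_max
    · exact le_trans (min_le_right _ _) (le_max_right _ _)
  have h12lo : min s1 s2 ≤ md := le_max_left _ _
  have h12hi : md ≤ max s1 s2 := by
    apply max_le
    · exact min_le_max
    apply max_le
    · exact le_trans (min_le_left _ _) (le_max_left _ _)
    · exact le_trans (min_le_left _ _) (le_max_right _ _)
  have h23lo : min s2 s3 ≤ md := le_trans (le_max_right _ _) (le_max_right _ _)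
  have h23hi : md ≤ max s2 s3 := by
    apply max_le
    · exact le_trans (min_le_right _ _) (le_max_left _ _)
    apply max_le
    · exact le_trans (min_le_right _ _) (le_max_right _ _)
    · exact min_le_max
  have hma : md ∈ I U a := hmem s1 s3 _ (I_ordConn U hcv a) hs1a hs3a h13lo h13hi
  have hmb : md ∈ I U b := hmem s1 s2 _ (I_ordConn U hcv b) hs1b hs2b h12lo h12hi
  have hmc : md ∈ I U c := hmem s2 s3 _ (I_ordConn U hcv c) hs2c hs3c h23lo h23hi
  obtain ⟨p, hp, hp0⟩ := hma
  obtain ⟨q, hq, hq0⟩ := hmb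
  obtain ⟨r, hr, hr0⟩ := hmc
  have h1 := cons U hop hcv hdis hab p hp q hq (hp0.trans hq0.symm)
  have h2 := cons U hop hcv hdis hbc q hq r hr (hq0.trans hr0.symm)
  have h3 := cons U hop hcv hdis hca r hr p hp (hr0.trans hp0.symm)
  linarith

/-- The chord lemma. -/
lemma chord (hop : ∀ i, IsOpen (U i)) (hcv : ∀ i, Convex ℝ (U i)) (hbdd : ∀ i, Bornology.IsBounded (U i)) (hdis : ∀ i j, i ≠ j → Disjoint (U i) (U j)) {u x w : Fin m}
    (hu : sInf (I U u) ≤ sInf (I U x)) (hw : sInf (I U w) ≤ sInf (I U x))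
    (hux : R U u x) (hxw : R U x w) : ∃ s, s ∈ I U u ∧ s ∈ I U w := by
  obtain ⟨p, hpu, hpx⟩ := R_proj U hux
  obtain ⟨q, hqx, hqw⟩ := R_proj U hxw
  rcases le_total p q with h | h
  · have hlt : sInf (I U w) < p := lt_of_le_of_lt hw (lt_of_mem_I_open U hop hbdd hpx)
    obtain ⟨z, hz, hzp⟩ := exists_lt_of_csInf_lt ⟨q, hqw⟩ hlt
    refine ⟨p, hpu, ?_⟩
    apply (I_ordConn U hcv w).uIcc_subset hz hqw
    rw [Set.mem_uIcc]
    exact Or.inl ⟨hzp.le, h⟩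
  · have hlt : sInf (I U u) < q := lt_of_le_of_lt hu (lt_of_mem_I_open U hop hbdd hqx)
    obtain ⟨z, hz, hzq⟩ := exists_lt_of_csInf_lt ⟨p, hpu⟩ hlt
    refine ⟨q, ?_, hqw⟩
    apply (I_ordConn U hcv u).uIcc_subset hz hpu
    rw [Set.mem_uIcc]
    exact Or.inl ⟨hzq.le, h⟩

/-- No cycles in the relation R. -/
lemma noCycle (hop : ∀ i, IsOpen (U i)) (hcv : ∀ i, Convex ℝ (U i)) (hbdd : ∀ i, Bornology.IsBounded (U i)) (hdis : ∀ i j, i ≠ j → Disjoint (U i) (U j)) : ∀ n, 1 ≤ n → ∀ c : ℕ → Fin m,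
    (∀ k, c (k + n) = c k) → (∀ k, R U (c k) (c (k + 1))) → False := by
  intro n
  induction n using Nat.strong_induction_on with
  | _ n ih =>
  intro hn c hper hedge
  rcases n with _ | _ | _ | _ | n
  · omega
  · -- n = 1
    have h := hedge 0
    have h1 : c (0 + 1) = c 0 := hper 0
    rw [h1] at h
    exact h.1 rfl
  · -- n = 2
    have h0 := hedge 0
    have h1 := hedge 1
    have h2 : c (0 + 2) = c 0 := hper 0
    have h2' : c (1 + 1) = c (0 + 2) := by norm_num
    rw [h2', h2] at h1
    exact antisym U hop hcv hdis h0 h1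
  · -- n = 3
    have h0 := hedge 0
    have h1 := hedge 1
    have h2 := hedge 2
    have h3 : c (0 + 3) = c 0 := hper 0
    have h3' : c (2 + 1) = c (0 + 3) := by norm_num
    rw [h3', h3] at h2
    exact threeCycle U hop hcv hdis h0 h1 h2
  · -- n ≥ 4, set N := n + 4
    set N := n + 4 with hN
    have hper' : ∀ k, c k = c (k % N) := by
      intro k
      have hq : ∀ q r, c (r + q * N) = c r := by
        intro q
        induction q with
        | zero => simp
        | succ q ihq =>
          intro r
          have he : r + (q + 1) * N = (r + q * N) + N := by ring
          rw [he, hper, ihq]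
      have hk : k = k % N + (k / N) * N := by
        rw [Nat.mod_add_div']
      conv_lhs => rw [hk]
      rw [hq]
    obtain ⟨k0, hk0mem, hk0max⟩ := Finset.exists_max_image (Finset.range N)
      (fun k => sInf (I U (c k))) ⟨0, by simp [hN]⟩
    have hmax : ∀ k, sInf (I U (c k)) ≤ sInf (I U (c k0)) := by
      intro k
      rw [hper' k]
      exact hk0max _ (Finset.mem_range.2 (Nat.mod_lt _ (by omega)))
    set k1 := k0 + N with hk1
    have hck1 : c k1 = c k0 := hper k0
    set c₁ : ℕ → Fin m := fun k => c (k + (k1 - 1)) with hc₁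
    have hc₁1 : c₁ 1 = c k1 := by
      simp only [hc₁]
      congr 1
      omega
    have hc₁per : ∀ k, c₁ (k + N) = c₁ k := by
      intro k
      simp only [hc₁]
      have he : k + N + (k1 - 1) = (k + (k1 - 1)) + N := by omega
      rw [he, hper]
    have hc₁edge : ∀ k, R U (c₁ k) (c₁ (k + 1)) := by
      intro k
      simp only [hc₁]
      have he : k + 1 + (k1 - 1) = (k + (k1 - 1)) + 1 := by omega
      rw [he]
      exact hedge _
    have hmax₁ : ∀ k, sInf (I U (c₁ k)) ≤ sInf (I U (c₁ 1)) := by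
      intro k
      rw [hc₁1, hck1]
      exact hmax _
    have hux : R U (c₁ 0) (c₁ 1) := hc₁edge 0
    have hxw : R U (c₁ 1) (c₁ (1 + 1)) := hc₁edge 1
    obtain ⟨s, hsu, hsw⟩ := chord U hop hcv hbdd hdis (hmax₁ 0) (hmax₁ 2) hux hxw
    by_cases huw : c₁ 0 = c₁ 2
    · rw [huw] at hux
      exact antisym U hop hcv hdis hux hxw
    rcases comparable U hdis huw hsu hsw with hRuw | hRwu
    · -- shorter cycle of length N - 1, skipping position 1
      set c' : ℕ → Fin m := fun k =>
        if k % (N - 1) = 0 then c₁ 0 else c₁ (k % (N - 1) + 1) with hc'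
      have hNm : 3 ≤ N - 1 := by omega
      have hc'per : ∀ k, c' (k + (N - 1)) = c' k := by
        intro k
        simp only [hc', Nat.add_mod_right]
      have hc'edge : ∀ k, R U (c' k) (c' (k + 1)) := by
        intro k
        have hj : k % (N - 1) < N - 1 := Nat.mod_lt _ (by omega)
        have hsm := succ_mod k (N - 1)
        simp only [hc']
        by_cases hj0 : k % (N - 1) = 0
        · have h1 : (k + 1) % (N - 1) = 1 := by
            rw [hsm, hj0, if_neg (by omega), Nat.mod_eq_of_lt (by omega)]
          rw [hj0, h1]
          simp only [if_pos rfl, if_neg (one_ne_zero)]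
          exact hRuw
        · by_cases hjtop : k % (N - 1) + 1 = N - 1
          · have h1 : (k + 1) % (N - 1) = 0 := by rw [hsm, if_pos hjtop]
            rw [if_neg hj0, h1, if_pos rfl, hjtop]
            have hc10 : c₁ 0 = c₁ (0 + N) := (hc₁per 0).symm
            have hNe : (N - 1) + 1 = 0 + N := by omega
            rw [hc10, ← hNe]
            exact hc₁edge (N - 1)
          · have h1 : (k + 1) % (N - 1) = k % (N - 1) + 1 := by
              rw [hsm, if_neg hjtop, Nat.mod_eq_of_lt (by omega)]
            rw [if_neg hj0, h1, if_neg (by omega)]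
            exact hc₁edge _
      exact ih (N - 1) (by omega) (by omega) c' hc'per hc'edge
    · exact threeCycle U hop hcv hdis hux hxw hRwu

/-- Some body has no other body strictly above it on a common vertical line. -/
lemma exists_sink (hop : ∀ i, IsOpen (U i)) (hcv : ∀ i, Convex ℝ (U i)) (hbdd : ∀ i, Bornology.IsBounded (U i)) (hdis : ∀ i j, i ≠ j → Disjoint (U i) (U j)) (hm : 0 < m) : ∃ i, ∀ j, ¬ R U i j := by
  by_contra h
  push_neg at h
  choose f hf using h
  have hcard : Fintype.card (Fin m) < Fintype.card (Fin (m + 1)) := by simp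
  obtain ⟨a, b, hab, heq⟩ := Fintype.exists_ne_map_eq_of_card_lt
    (fun k : Fin (m + 1) => f^[(k : ℕ)] (⟨0, hm⟩ : Fin m)) hcard
  have hab' : (a : ℕ) ≠ (b : ℕ) := fun h => hab (Fin.ext h)
  -- wlog a < b
  obtain ⟨a', b', hlt, heq'⟩ : ∃ a' b' : ℕ, a' < b' ∧
      f^[a'] (⟨0, hm⟩ : Fin m) = f^[b'] (⟨0, hm⟩ : Fin m) := by
    rcases Nat.lt_or_ge (a : ℕ) (b : ℕ) with h1 | h1
    · exact ⟨a, b, h1, heq⟩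
    · exact ⟨b, a, by omega, heq.symm⟩
  set base := f^[a'] (⟨0, hm⟩ : Fin m) with hbase
  set p := b' - a' with hp
  have hp1 : 1 ≤ p := by omega
  have hfix : f^[p] base = base := by
    rw [hbase, ← Function.iterate_add_apply]
    have : p + a' = b' := by omega
    rw [this, ← heq']
  set c : ℕ → Fin m := fun k => f^[k % p] base with hc
  have hstep : ∀ k, c (k + 1) = f (c k) := by
    intro k
    have hsm := succ_mod k p
    have hjlt : k % p < p := Nat.mod_lt _ (by omega)
    simp only [hc]
    by_cases htop : k % p + 1 = p
    · rw [hsm, if_pos htop]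
      have h2 : f^[k % p + 1] base = f (f^[k % p] base) := Function.iterate_succ_apply' f _ _
      rw [← h2, htop, hfix]
      rfl
    · rw [hsm, if_neg htop, Nat.mod_eq_of_lt (by omega : k % p + 1 < p)]
      exact Function.iterate_succ_apply' f _ _
  have hcper : ∀ k, c (k + p) = c k := by
    intro k
    simp only [hc, Nat.add_mod_right]
  have hcedge : ∀ k, R U (c k) (c (k + 1)) := by
    intro k
    rw [hstep k]
    exact hf (c k)
  exact noCycle U hop hcv hbdd hdis p hp1 c hcper hcedge

end props

end

end PlanarDisassemble

open RealInnerProductSpace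

/-- Every finite planar arrangement of pairwise non-overlapping convex bodies can be
disassembled: some body can be translated arbitrarily far without meeting the
interiors of the others. -/
theorem planar_convex_bodies_disassemble
    {m : ℕ} (hm : 0 < m) (K : Fin m → Set (EuclideanSpace ℝ (Fin 2)))
    (hcomp : ∀ i, IsCompact (K i)) (hconv : ∀ i, Convex ℝ (K i))
    (hint : ∀ i, (interior (K i)).Nonempty)
    (hdisj : ∀ i j, i ≠ j → Disjoint (interior (K i)) (interior (K j))) :
    ∃ i : Fin m, ∃ v : EuclideanSpace ℝ (Fin 2), v ≠ 0 ∧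
      ∀ t : ℝ, 0 ≤ t → ∀ j, j ≠ i →
        Disjoint (interior ((fun x => x + t • v) '' K i)) (interior (K j)) := by
  classical
  set U : Fin m → Set PlanarDisassemble.E2 := fun i => interior (K i) with hU
  have hop : ∀ i, IsOpen (U i) := fun i => isOpen_interior
  have hcv : ∀ i, Convex ℝ (U i) := fun i => (hconv i).interior
  have hbdd : ∀ i, Bornology.IsBounded (U i) := fun i =>
    ((hcomp i).isBounded).subset interior_subset
  have hdis : ∀ i j, i ≠ j → Disjoint (U i) (U j) := hdisj
  obtain ⟨i, hi⟩ := PlanarDisassemble.exists_sink U hop hcv hbdd hdis hm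
  refine ⟨i, PlanarDisassemble.ee1, PlanarDisassemble.ee1_ne_zero, ?_⟩
  intro t ht j hj
  rcases eq_or_lt_of_le ht with ht0 | htpos
  · have himg : (fun x => x + t • PlanarDisassemble.ee1) '' K i = K i := by
      rw [← ht0]
      simp
    rw [himg]
    exact hdisj i j (fun h => hj h.symm)
  · rw [Set.disjoint_left]
    intro y hy1 hy2
    apply hi j
    -- y ∈ interior of translated K i
    have hhomeo : interior ((fun x => x + t • PlanarDisassemble.ee1) '' K i)
        = (fun x => x + t • PlanarDisassemble.ee1) '' interior (K i) := by
      have := (Homeomorph.addRight (t • PlanarDisassemble.ee1)).image_interior (K i)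
      simpa [Homeomorph.addRight] using this.symm
    rw [hhomeo] at hy1
    obtain ⟨a, ha, hay⟩ := hy1
    have hay' : a + t • PlanarDisassemble.ee1 = y := hay
    refine ⟨fun h => hj h.symm, a, ha, y, hy2, ?_, ?_⟩
    · rw [← hay']
      have : (a + t • PlanarDisassemble.ee1) 0 = a 0 + t * PlanarDisassemble.ee1 0 := by
        simp [PiLp.add_apply, PiLp.smul_apply, smul_eq_mul]
      rw [this]
      simp [PlanarDisassemble.ee1, EuclideanSpace.single_apply]
    · rw [← hay']
      have : (a + t • PlanarDisassemble.ee1) 1 = a 1 + t * PlanarDisassemble.ee1 1 := by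
        simp [PiLp.add_apply, PiLp.smul_apply, smul_eq_mul]
      rw [this]
      simp [PlanarDisassemble.ee1, EuclideanSpace.single_apply]
      linarith
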